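/- Let 𝒫' refine 𝒫 and let coarse and fine finite DTMDPs over 𝒫 and 𝒫' with reward structures satisfy the refinement correspondence, with common uniformisation rate q > 0 and time bound t ≥ 0. Then for all blocks z ∈ 𝒫, z' ∈ 𝒫' with z' ⊆ z, the maximal values satisfy sup_{σ ∈ HR} V_c(σ, z) ≥ sup_{σ' ∈ HR} V_f(σ', z'), where V_c and V_f are the scheduler values of the coarse and fine DTMDPs with their respective rewards; i.e., refining the partition cannot worsen the upper bound. -/

import Mathlib

open scoped BigOperators

namespace TR

variable {S A : Type} [Fintype S] [Fintype A] [DecidableEq S] [DecidableEq A]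

/-- Poisson probabilities `φ_λ(i) = λ^i/i! · e^{−λ}`. -/
noncomputable def phi (lam : ℝ) (i : ℕ) : ℝ :=
  lam ^ i / (Nat.factorial i : ℝ) * Real.exp (-lam)

/-- `ψ_λ(i) = 1 − Σ_{j=0}^{i} φ_λ(j)`. -/
noncomputable def psi (lam : ℝ) (i : ℕ) : ℝ :=
  1 - ∑ j ∈ Finset.range (i + 1), phi lam j

/-- Action `a` is enabled in state `s`. -/
def Enabled (P : S → A → S → ℝ) (s : S) (a : A) : Prop :=
  ∑ s', P s a s' = 1

/-- `P` is the transition function of a finite DTMDP. -/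
def IsDTMDP (P : S → A → S → ℝ) : Prop :=
  (∀ s a s', 0 ≤ P s a s') ∧
  (∀ s a, (∑ s', P s a s') = 0 ∨ (∑ s', P s a s') = 1) ∧
  (∀ s, ∃ a, Enabled P s a)

/-- History-dependent randomised scheduler.  A history is encoded as a pair of
a list of (state, action) pairs (most recent first) and the current state. -/
def IsHR (P : S → A → S → ℝ) (sch : List (S × A) × S → A → ℝ) : Prop :=
  (∀ h a, 0 ≤ sch h a) ∧ (∀ h, ∑ a, sch h a = 1) ∧
  (∀ h a, 0 < sch h a → Enabled P h.2 a)

/-- Probability of the path recorded in the given history (of length `n`,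
starting at `s0`) under the HR scheduler `sch`. -/
noncomputable def hrHistProb (P : S → A → S → ℝ) (sch : List (S × A) × S → A → ℝ)
    (s0 : S) : ℕ → List (S × A) × S → ℝ
  | 0, h => if h.1 = [] ∧ h.2 = s0 then 1 else 0
  | _ + 1, ([], _) => 0
  | n + 1, ((s, a) :: rest, s') =>
      hrHistProb P sch s0 n (rest, s) * sch (rest, s) a * P s a s'

/-- Transient probability `tprob^σ(s0, n, s)`: total probability of all paths of
length `n` from `s0` ending in `s`. -/
noncomputable def hrProb (P : S → A → S → ℝ) (sch : List (S × A) × S → A → ℝ)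
    (s0 : S) (n : ℕ) (s : S) : ℝ :=
  ∑' l : List (S × A), hrHistProb P sch s0 n (l, s)

/-- Counting randomised scheduler. -/
def IsCR (P : S → A → S → ℝ) (sch : S → ℕ → A → ℝ) : Prop :=
  (∀ s n a, 0 ≤ sch s n a) ∧ (∀ s n, ∑ a, sch s n a = 1) ∧
  (∀ s n a, 0 < sch s n a → Enabled P s a)

/-- Transient distribution of a CR scheduler. -/
noncomputable def crProb (P : S → A → S → ℝ) (sch : S → ℕ → A → ℝ) (s0 : S) :
    ℕ → S → ℝ
  | 0 => fun s => if s = s0 then 1 else 0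
  | n + 1 => fun s' => ∑ s, crProb P sch s0 n s * ∑ a, sch s n a * P s a s'

/-- Counting deterministic scheduler. -/
def IsCD (P : S → A → S → ℝ) (d : S → ℕ → A) : Prop :=
  ∀ s n, Enabled P s (d s n)

/-- Transient distribution of a CD scheduler. -/
noncomputable def cdProb (P : S → A → S → ℝ) (d : S → ℕ → A) (s0 : S) :
    ℕ → S → ℝ
  | 0 => fun s => if s = s0 then 1 else 0
  | n + 1 => fun s' => ∑ s, cdProb P d s0 n s * P s (d s n) s'

/-- The value `V = Σ_i [ φ_{qt}(i)·Σ_s p_i(s)·f(s) + ψ_{qt}(i)·Σ_s p_i(s)·c(s)/q ]`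
of transient distributions `p` w.r.t. uniformisation rate `q`, time bound `t`
and rewards `(c, f)`. -/
noncomputable def value (q t : ℝ) (c f : S → ℝ) (p : ℕ → S → ℝ) : ℝ :=
  ∑' i : ℕ, (phi (q * t) i * ∑ s, p i s * f s
    + psi (q * t) i * ∑ s, p i s * (c s / q))

/-- Value-iteration vectors of a CR scheduler: `crVI … k j` is `q_{k+1-j}`,
i.e. `crVI … k 0 = q_{k+1} ≡ 0` and `crVI … k (k+1) = q_0`. -/
noncomputable def crVI (P : S → A → S → ℝ) (sch : S → ℕ → A → ℝ)
    (q t : ℝ) (c f : S → ℝ) (k : ℕ) : ℕ → S → ℝ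
  | 0 => fun _ => 0
  | j + 1 => fun s =>
      (∑ a, sch s (k - j) a * ∑ s', P s a s' * crVI P sch q t c f k j s')
      + phi (q * t) (k - j) * f s + psi (q * t) (k - j) * (c s / q)

/-- Maximising value-iteration vectors: `maxVI … k j` is `q'_{k+1-j}`,
i.e. `maxVI … k 0 = q'_{k+1} ≡ 0` and `maxVI … k (k+1) = q'_0`. -/
noncomputable def maxVI (P : S → A → S → ℝ)
    (q t : ℝ) (c f : S → ℝ) (k : ℕ) : ℕ → S → ℝ
  | 0 => fun _ => 0
  | j + 1 => fun s =>
      sSup {x : ℝ | ∃ a, Enabled P s a ∧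
        x = ∑ s', P s a s' * maxVI P q t c f k j s'}
      + phi (q * t) (k - j) * f s + psi (q * t) (k - j) * (c s / q)

/-- Maximum of a real-valued function on a finite nonempty type. -/
noncomputable def maxOf [Nonempty S] (g : S → ℝ) : ℝ :=
  Finset.univ.sup' Finset.univ_nonempty g

/-- `k` is `ε`-sufficient: `Σ_{n=0}^{k} ψ_{qt}(n) > qt − ε·q/(2·max_s c(s))`
(dropped if `max_s c(s) = 0`) and `ψ_{qt}(k)·max_s f(s) < ε/2`. -/
def EpsSufficient [Nonempty S] (q t : ℝ) (c f : S → ℝ) (ε : ℝ) (k : ℕ) : Prop :=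
  (maxOf c = 0 ∨
    (∑ n ∈ Finset.range (k + 1), psi (q * t) n) > q * t - ε * q / (2 * maxOf c)) ∧
  psi (q * t) k * maxOf f < ε / 2

/-- `n`-step transition probabilities (matrix powers) of a stochastic matrix. -/
noncomputable def matPow (P : S → S → ℝ) : ℕ → S → S → ℝ
  | 0 => fun s s' => if s = s' then 1 else 0
  | n + 1 => fun s s' => ∑ s'', matPow P n s s'' * P s'' s'

/-- `part` is a partition of the finite state set `S`. -/
def IsPartition (part : Finset (Finset S)) : Prop :=
  (∀ z ∈ part, z.Nonempty) ∧ (∀ s : S, ∃ z ∈ part, s ∈ z) ∧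
  (∀ z ∈ part, ∀ z' ∈ part, z ≠ z' → Disjoint z z')

/-- Abstraction DTMDP of a stochastic matrix w.r.t. a partition: states are
blocks, actions are concrete states, `P̄(z, s, z') = Σ_{s' ∈ z'} P(s,s')` if
`s ∈ z` and `0` otherwise. -/
noncomputable def abst (P : S → S → ℝ) (part : Finset (Finset S)) :
    {z // z ∈ part} → S → {z // z ∈ part} → ℝ :=
  fun z s z' => if s ∈ z.1 then ∑ s' ∈ z'.1, P s s' else 0



set_option linter.unusedSectionVars false
set_option maxHeartbeats 1000000

section PoissonAux
variable {lam : ℝ}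

lemma phi_nonneg (hlam : 0 ≤ lam) (i : ℕ) : 0 ≤ phi lam i :=
  mul_nonneg (div_nonneg (pow_nonneg hlam i) (by positivity)) (Real.exp_nonneg _)

lemma exp_eq_tsum' (x : ℝ) : Real.exp x = ∑' n : ℕ, x ^ n / n.factorial := by
  rw [Real.exp_eq_exp_ℝ, NormedSpace.exp_eq_tsum_div]

lemma sum_phi_le_one (hlam : 0 ≤ lam) (m : ℕ) : ∑ j ∈ Finset.range m, phi lam j ≤ 1 := by
  have hsum := Real.summable_pow_div_factorial lam
  have h1 : ∑ j ∈ Finset.range m, lam ^ j / j.factorial ≤ Real.exp lam := by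
    rw [exp_eq_tsum']
    exact Summable.sum_le_tsum _ (fun i _ => by positivity) hsum
  calc ∑ j ∈ Finset.range m, phi lam j
      = (∑ j ∈ Finset.range m, lam ^ j / j.factorial) * Real.exp (-lam) := by
        rw [Finset.sum_mul]; rfl
    _ ≤ Real.exp lam * Real.exp (-lam) := by
        apply mul_le_mul_of_nonneg_right h1 (Real.exp_nonneg _)
    _ = 1 := by rw [← Real.exp_add]; simp

lemma psi_nonneg (hlam : 0 ≤ lam) (i : ℕ) : 0 ≤ psi lam i :=
  sub_nonneg.2 (sum_phi_le_one hlam _)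

lemma summable_phi (lam : ℝ) : Summable (phi lam) := by
  exact (Real.summable_pow_div_factorial lam).mul_right (Real.exp (-lam))

set_option maxHeartbeats 1000000 in
lemma psi_le (hlam : 0 ≤ lam) (i : ℕ) :
    psi lam i ≤ lam ^ (i+1) / (Nat.factorial (i+1) : ℝ) := by
  have hsum := Real.summable_pow_div_factorial lam
  have h1 : ∑ j ∈ Finset.range (i+1), lam ^ j / (j.factorial : ℝ)
      + ∑' k : ℕ, lam ^ (k+(i+1)) / ((k+(i+1)).factorial : ℝ) = Real.exp lam := by
    rw [exp_eq_tsum']; exact Summable.sum_add_tsum_nat_add (i+1) hsum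
  have hpsi : psi lam i
      = Real.exp (-lam) * ∑' k : ℕ, lam ^ (k+(i+1)) / ((k+(i+1)).factorial : ℝ) := by
    have h2 : (∑' k : ℕ, lam ^ (k+(i+1)) / ((k+(i+1)).factorial : ℝ))
        = Real.exp lam - ∑ j ∈ Finset.range (i+1), lam ^ j / (j.factorial : ℝ) := by
      linarith [h1]
    rw [psi, h2]
    have h3 : ∑ j ∈ Finset.range (i + 1), phi lam j
        = (∑ j ∈ Finset.range (i+1), lam ^ j / (j.factorial : ℝ)) * Real.exp (-lam) := by
      rw [Finset.sum_mul]; rfl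
    have hexp : Real.exp (-lam) * Real.exp lam = 1 := by rw [← Real.exp_add]; simp
    rw [h3, mul_sub, hexp]
    ring
  have hterm : ∀ k : ℕ, lam ^ (k+(i+1)) / ((k+(i+1)).factorial : ℝ)
      ≤ lam ^ (i+1) / ((i+1).factorial : ℝ) * (lam ^ k / (k.factorial : ℝ)) := by
    intro k
    have hfac : ((i+1).factorial : ℝ) * (k.factorial : ℝ) ≤ ((k+(i+1)).factorial : ℝ) := by
      have := Nat.factorial_mul_factorial_dvd_factorial_add (i+1) k
      have hle := Nat.le_of_dvd (Nat.factorial_pos _) this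
      calc ((i+1).factorial : ℝ) * (k.factorial : ℝ)
          = (((i+1).factorial * k.factorial : ℕ) : ℝ) := by push_cast; ring
        _ ≤ (((i+1)+k).factorial : ℝ) := by exact_mod_cast hle
        _ = ((k+(i+1)).factorial : ℝ) := by rw [Nat.add_comm]
    have hnum : lam ^ (k+(i+1)) = lam ^ (i+1) * lam ^ k := by
      rw [← pow_add]; ring_nf
    rw [hnum, div_mul_div_comm]
    apply div_le_div_of_nonneg_left ?_ ?_ hfac
    · positivity
    · positivity
  have hS1 : Summable (fun k : ℕ => lam ^ (k+(i+1)) / ((k+(i+1)).factorial : ℝ)) :=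
    (summable_nat_add_iff (i+1)).2 hsum
  have hS2 : Summable (fun k : ℕ => lam ^ (i+1) / ((i+1).factorial : ℝ) * (lam ^ k / (k.factorial : ℝ))) :=
    hsum.mul_left _
  have h3 : (∑' k : ℕ, lam ^ (k+(i+1)) / ((k+(i+1)).factorial : ℝ))
      ≤ lam ^ (i+1) / ((i+1).factorial : ℝ) * Real.exp lam := by
    calc _ ≤ ∑' k : ℕ, lam ^ (i+1) / ((i+1).factorial : ℝ) * (lam ^ k / (k.factorial : ℝ)) :=
          Summable.tsum_le_tsum hterm hS1 hS2
      _ = lam ^ (i+1) / ((i+1).factorial : ℝ) * Real.exp lam := by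
          rw [tsum_mul_left, exp_eq_tsum']
  calc psi lam i = Real.exp (-lam) * ∑' k : ℕ, lam ^ (k+(i+1)) / ((k+(i+1)).factorial : ℝ) := hpsi
    _ ≤ Real.exp (-lam) * (lam ^ (i+1) / ((i+1).factorial : ℝ) * Real.exp lam) :=
        mul_le_mul_of_nonneg_left h3 (Real.exp_nonneg _)
    _ = lam ^ (i+1) / ((i+1).factorial : ℝ) := by
        rw [mul_comm (lam ^ (i+1) / _), ← mul_assoc, ← Real.exp_add]; simp

lemma summable_psi (hlam : 0 ≤ lam) : Summable (psi lam) := by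
  refine Summable.of_nonneg_of_le (psi_nonneg hlam) (psi_le hlam) ?_
  exact (summable_nat_add_iff 1).2 (Real.summable_pow_div_factorial lam)

end PoissonAux

def listsOfLen (α : Type) [Fintype α] [DecidableEq α] : ℕ → Finset (List α)
  | 0 => {[]}
  | n+1 => (Finset.univ ×ˢ listsOfLen α n).image (fun p => p.1 :: p.2)

lemma mem_listsOfLen {α : Type} [Fintype α] [DecidableEq α] {n : ℕ} {l : List α} :
    l ∈ listsOfLen α n ↔ l.length = n := by
  induction n generalizing l with
  | zero => simp [listsOfLen, List.length_eq_zero_iff]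
  | succ n ih =>
    simp only [listsOfLen, Finset.mem_image, Finset.mem_product, Finset.mem_univ, true_and]
    constructor
    · rintro ⟨⟨a, l'⟩, hl', rfl⟩; simp [ih.1 hl']
    · intro hl
      cases l with
      | nil => simp at hl
      | cons a l' =>
        refine ⟨(a, l'), ?_, rfl⟩
        simp only [List.length_cons, Nat.add_right_cancel_iff] at hl
        exact ih.2 hl

lemma sum_listsOfLen_succ {α : Type} [Fintype α] [DecidableEq α] {M : Type} [AddCommMonoid M]
    (n : ℕ) (F : List α → M) :
    ∑ l ∈ listsOfLen α (n+1), F l = ∑ p : α, ∑ l ∈ listsOfLen α n, F (p :: l) := by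
  rw [show listsOfLen α (n+1) = (Finset.univ ×ˢ listsOfLen α n).image (fun p => p.1 :: p.2) from rfl]
  rw [Finset.sum_image ?_, Finset.sum_product]
  intro x _ y _ h
  obtain ⟨h1, h2⟩ := List.cons.inj h
  exact Prod.ext h1 h2

section HRAux
variable {P : S → A → S → ℝ} {sch : List (S × A) × S → A → ℝ} {s0 : S}

lemma hrHistProb_nonneg (hP : ∀ s a s', 0 ≤ P s a s') (hs : ∀ h a, 0 ≤ sch h a) :
    ∀ (n : ℕ) (h : List (S × A) × S), 0 ≤ hrHistProb P sch s0 n h := by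
  intro n
  induction n with
  | zero =>
    rintro ⟨l, s⟩
    rw [show hrHistProb P sch s0 0 (l, s) = if l = [] ∧ s = s0 then 1 else 0 from rfl]
    split <;> norm_num
  | succ n ih =>
    rintro ⟨l, s'⟩
    cases l with
    | nil => exact le_of_eq rfl
    | cons p rest =>
      obtain ⟨s, a⟩ := p
      exact mul_nonneg (mul_nonneg (ih _) (hs _ _)) (hP _ _ _)

lemma hrHistProb_length {n : ℕ} {l : List (S × A)} {s : S}
    (h : hrHistProb P sch s0 n (l, s) ≠ 0) : l.length = n := by
  induction n generalizing l s with
  | zero =>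
    rw [show hrHistProb P sch s0 0 (l, s) = if l = [] ∧ s = s0 then 1 else 0 from rfl] at h
    by_cases hc : l = [] ∧ s = s0
    · rw [hc.1]; rfl
    · simp [hc] at h
  | succ n ih =>
    cases l with
    | nil => exact absurd rfl h
    | cons p rest =>
      obtain ⟨s1, a⟩ := p
      rw [show hrHistProb P sch s0 (n+1) ((s1,a)::rest, s)
          = hrHistProb P sch s0 n (rest, s1) * sch (rest, s1) a * P s1 a s from rfl] at h
      have h1 : hrHistProb P sch s0 n (rest, s1) ≠ 0 := by
        intro h0; rw [h0] at h; simp at h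
      simp [ih h1]

lemma hrProb_eq_sum (n : ℕ) (s : S) :
    hrProb P sch s0 n s = ∑ l ∈ listsOfLen (S × A) n, hrHistProb P sch s0 n (l, s) := by
  refine tsum_eq_sum (fun l hl => ?_)
  by_contra h
  exact hl (mem_listsOfLen.2 (hrHistProb_length h))

lemma hrProb_nonneg (hP : ∀ s a s', 0 ≤ P s a s') (hs : ∀ h a, 0 ≤ sch h a)
    (n : ℕ) (s : S) : 0 ≤ hrProb P sch s0 n s := by
  rw [hrProb_eq_sum]
  exact Finset.sum_nonneg fun l _ => hrHistProb_nonneg hP hs n (l, s)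

lemma sum_hrProb_le_one (hP : IsDTMDP P) (hs : IsHR P sch) (n : ℕ) :
    ∑ s, hrProb P sch s0 n s ≤ 1 := by
  induction n with
  | zero =>
    have : ∀ s : S, hrProb P sch s0 0 s = if s = s0 then 1 else 0 := by
      intro s
      rw [hrProb_eq_sum, show listsOfLen (S × A) 0 = {[]} from rfl, Finset.sum_singleton,
        show hrHistProb P sch s0 0 ([], s) = if ([]:List (S×A)) = [] ∧ s = s0 then 1 else 0 from rfl]
      simp
    simp only [this]
    rw [Finset.sum_ite_eq' Finset.univ s0 (fun _ => (1:ℝ))]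
    simp
  | succ n ih =>
    have hstep : ∀ s' : S, hrProb P sch s0 (n+1) s'
        = ∑ p : S × A, ∑ l ∈ listsOfLen (S × A) n,
            hrHistProb P sch s0 n (l, p.1) * sch (l, p.1) p.2 * P p.1 p.2 s' := by
      intro s'
      rw [hrProb_eq_sum, sum_listsOfLen_succ]
      refine Finset.sum_congr rfl fun p _ => Finset.sum_congr rfl fun l _ => ?_
      obtain ⟨s, a⟩ := p; rfl
    calc ∑ s', hrProb P sch s0 (n+1) s'
        = ∑ p : S × A, ∑ l ∈ listsOfLen (S × A) n,
            hrHistProb P sch s0 n (l, p.1) * sch (l, p.1) p.2 * (∑ s', P p.1 p.2 s') := by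
          simp only [hstep]
          rw [Finset.sum_comm]
          refine Finset.sum_congr rfl fun p _ => ?_
          rw [Finset.sum_comm]
          refine Finset.sum_congr rfl fun l _ => ?_
          rw [Finset.mul_sum]
      _ ≤ ∑ p : S × A, ∑ l ∈ listsOfLen (S × A) n,
            hrHistProb P sch s0 n (l, p.1) * sch (l, p.1) p.2 := by
          refine Finset.sum_le_sum fun p _ => Finset.sum_le_sum fun l _ => ?_
          have hnn : 0 ≤ hrHistProb P sch s0 n (l, p.1) * sch (l, p.1) p.2 :=
            mul_nonneg (hrHistProb_nonneg hP.1 hs.1 _ _) (hs.1 _ _)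
          have hle : (∑ s', P p.1 p.2 s') ≤ 1 := by
            rcases hP.2.1 p.1 p.2 with h | h <;> rw [h] <;> norm_num
          calc hrHistProb P sch s0 n (l, p.1) * sch (l, p.1) p.2 * (∑ s', P p.1 p.2 s')
              ≤ hrHistProb P sch s0 n (l, p.1) * sch (l, p.1) p.2 * 1 :=
                mul_le_mul_of_nonneg_left hle hnn
            _ = _ := mul_one _
      _ = ∑ s, ∑ l ∈ listsOfLen (S × A) n,
            hrHistProb P sch s0 n (l, s) * (∑ a, sch (l, s) a) := by
          rw [Fintype.sum_prod_type]
          refine Finset.sum_congr rfl fun s _ => ?_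
          rw [Finset.sum_comm]
          refine Finset.sum_congr rfl fun l _ => ?_
          rw [Finset.mul_sum]
      _ = ∑ s, hrProb P sch s0 n s := by
          refine Finset.sum_congr rfl fun s _ => ?_
          rw [hrProb_eq_sum]
          refine Finset.sum_congr rfl fun l _ => ?_
          rw [hs.2.1, mul_one]
      _ ≤ 1 := ih

lemma hrProb_le_one (hP : IsDTMDP P) (hs : IsHR P sch) (n : ℕ) (s : S) :
    hrProb P sch s0 n s ≤ 1 := by
  calc hrProb P sch s0 n s ≤ ∑ s', hrProb P sch s0 n s' :=
        Finset.single_le_sum (fun s' _ => hrProb_nonneg hP.1 hs.1 n s') (Finset.mem_univ s)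
    _ ≤ 1 := sum_hrProb_le_one hP hs n

lemma exists_isHR (hP : IsDTMDP P) : ∃ sch : List (S × A) × S → A → ℝ, IsHR P sch := by
  choose d hd using hP.2.2
  refine ⟨fun h a => if a = d h.2 then 1 else 0, fun h a => by dsimp only; split <;> norm_num, fun h => ?_, ?_⟩
  · rw [Finset.sum_ite_eq' Finset.univ (d h.2) (fun _ => (1:ℝ))]; simp
  · intro h a ha
    have : a = d h.2 := by by_contra hne; simp [hne] at ha
    rw [this]; exact hd h.2
end HRAux

section Sim
variable {Cs Ac Fs Af : Type} [Fintype Cs] [DecidableEq Cs] [Fintype Ac] [DecidableEq Ac]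
  [Fintype Fs] [DecidableEq Fs] [Fintype Af] [DecidableEq Af]
variable (u : Fs → Cs) (cmap : Fs → Af → Ac) (e : Cs → Ac)
  (Pf : Fs → Af → Fs → ℝ) (sf : List (Fs × Af) × Fs → Af → ℝ) (z0 : Fs)

/-- weight of a fine history -/
noncomputable def simW (h : List (Fs × Af) × Fs) : ℝ := hrHistProb Pf sf z0 h.1.length h

/-- projection of fine history lists to coarse ones -/
def mapPi : List (Fs × Af) → List (Cs × Ac) := List.map (fun p => (u p.1, cmap p.1 p.2))

lemma mapPi_nil : mapPi u cmap [] = [] := rfl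
lemma mapPi_cons (p : Fs × Af) (l : List (Fs × Af)) :
    mapPi u cmap (p :: l) = (u p.1, cmap p.1 p.2) :: mapPi u cmap l := rfl

lemma simW_cons (zf : Fs) (af : Af) (l : List (Fs × Af)) (zf2 : Fs) :
    simW Pf sf z0 ((zf, af) :: l, zf2)
      = simW Pf sf z0 (l, zf) * sf (l, zf) af * Pf zf af zf2 := rfl

/-- total fine probability of histories projecting to a given coarse history -/
noncomputable def simD (h : List (Cs × Ac) × Cs) : ℝ :=
  ∑ zf : Fs, ∑ l ∈ listsOfLen (Fs × Af) h.1.length,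
    if u zf = h.2 ∧ mapPi u cmap l = h.1 then simW Pf sf z0 (l, zf) else 0

noncomputable def simN (h : List (Cs × Ac) × Cs) (ac : Ac) : ℝ :=
  ∑ zf : Fs, ∑ l ∈ listsOfLen (Fs × Af) h.1.length,
    if u zf = h.2 ∧ mapPi u cmap l = h.1 then
      simW Pf sf z0 (l, zf) * ∑ af : Af, (if cmap zf af = ac then sf (l, zf) af else 0)
    else 0

/-- the simulating coarse scheduler -/
noncomputable def simSch (h : List (Cs × Ac) × Cs) (ac : Ac) : ℝ :=
  if 0 < simD u cmap Pf sf z0 h then simN u cmap Pf sf z0 h ac / simD u cmap Pf sf z0 h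
  else if ac = e h.2 then 1 else 0

variable {u cmap e Pf sf z0}

lemma simW_nonneg (hPf : ∀ s a s', 0 ≤ Pf s a s') (hsf : ∀ h a, 0 ≤ sf h a)
    (h : List (Fs × Af) × Fs) : 0 ≤ simW Pf sf z0 h :=
  hrHistProb_nonneg hPf hsf _ _

lemma simD_nonneg (hPf : ∀ s a s', 0 ≤ Pf s a s') (hsf : ∀ h a, 0 ≤ sf h a)
    (h : List (Cs × Ac) × Cs) : 0 ≤ simD u cmap Pf sf z0 h := by
  refine Finset.sum_nonneg fun zf _ => Finset.sum_nonneg fun l _ => ?_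
  split
  · exact simW_nonneg hPf hsf _
  · exact le_rfl

lemma simN_nonneg (hPf : ∀ s a s', 0 ≤ Pf s a s') (hsf : ∀ h a, 0 ≤ sf h a)
    (h : List (Cs × Ac) × Cs) (ac : Ac) : 0 ≤ simN u cmap Pf sf z0 h ac := by
  refine Finset.sum_nonneg fun zf _ => Finset.sum_nonneg fun l _ => ?_
  split
  · refine mul_nonneg (simW_nonneg hPf hsf _) (Finset.sum_nonneg fun af _ => ?_)
    split
    · exact hsf _ _
    · exact le_rfl
  · exact le_rfl

lemma sum_simN (hsf : IsHR Pf sf) (h : List (Cs × Ac) × Cs) :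
    ∑ ac : Ac, simN u cmap Pf sf z0 h ac = simD u cmap Pf sf z0 h := by
  unfold simN simD
  rw [Finset.sum_comm]
  refine Finset.sum_congr rfl fun zf _ => ?_
  rw [Finset.sum_comm]
  refine Finset.sum_congr rfl fun l _ => ?_
  by_cases hc : u zf = h.2 ∧ mapPi u cmap l = h.1
  · rw [Finset.sum_congr rfl (fun ac _ => if_pos hc), if_pos hc, ← Finset.mul_sum]
    have : ∑ ac : Ac, ∑ af : Af, (if cmap zf af = ac then sf (l, zf) af else 0)
        = ∑ af : Af, sf (l, zf) af := by
      rw [Finset.sum_comm]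
      refine Finset.sum_congr rfl fun af _ => ?_
      rw [Finset.sum_ite_eq Finset.univ (cmap zf af) (fun _ => sf (l, zf) af)]
      simp
    rw [this, hsf.2.1, mul_one]
  · rw [Finset.sum_congr rfl (fun ac _ => if_neg hc), if_neg hc, Finset.sum_const_zero]

lemma isHR_simSch {Pc : Cs → Ac → Cs → ℝ}
    (hsf : IsHR Pf sf) (hPf : ∀ s a s', 0 ≤ Pf s a s')
    (hen : ∀ zf af, Enabled Pc (u zf) (cmap zf af))
    (hee : ∀ Z, Enabled Pc Z (e Z)) :
    IsHR Pc (simSch u cmap e Pf sf z0) := by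
  refine ⟨fun h ac => ?_, fun h => ?_, fun h ac hpos => ?_⟩
  · unfold simSch
    split
    · exact div_nonneg (simN_nonneg hPf hsf.1 h ac) (le_of_lt (by assumption))
    · split <;> norm_num
  · unfold simSch
    by_cases hD : 0 < simD u cmap Pf sf z0 h
    · simp only [hD, if_true]
      rw [← Finset.sum_div, sum_simN hsf, div_self (ne_of_gt hD)]
    · simp only [hD, if_false]
      rw [Finset.sum_ite_eq' Finset.univ (e h.2) (fun _ => (1:ℝ))]
      simp
  · unfold simSch at hpos
    by_cases hD : 0 < simD u cmap Pf sf z0 h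
    · simp only [hD, if_true] at hpos
      have hN : simN u cmap Pf sf z0 h ac ≠ 0 := by
        intro h0
        rw [h0, zero_div] at hpos
        exact lt_irrefl _ hpos
      unfold simN at hN
      obtain ⟨zf, -, hzf⟩ := Finset.exists_ne_zero_of_sum_ne_zero hN
      obtain ⟨l, -, hl⟩ := Finset.exists_ne_zero_of_sum_ne_zero hzf
      by_cases hc : u zf = h.2 ∧ mapPi u cmap l = h.1
      · rw [if_pos hc] at hl
        have hsum : (∑ af : Af, if cmap zf af = ac then sf (l, zf) af else 0) ≠ 0 := by
          intro h0; rw [h0, mul_zero] at hl; exact hl rfl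
        obtain ⟨af, -, haf⟩ := Finset.exists_ne_zero_of_sum_ne_zero hsum
        have hcm : cmap zf af = ac := by
          by_contra hne; simp [hne] at haf
        rw [← hc.1, ← hcm]
        exact hen zf af
      · rw [if_neg hc] at hl; exact absurd rfl hl
    · simp only [hD, if_false] at hpos
      have : ac = e h.2 := by by_contra hne; simp [hne] at hpos
      rw [this]; exact hee h.2

lemma simD_invariant {Pc : Cs → Ac → Cs → ℝ}
    (hsf : IsHR Pf sf) (hPf : ∀ s a s', 0 ≤ Pf s a s')
    (hcm : ∀ zf af, Enabled Pf zf af → ∀ Z : Cs,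
      Pc (u zf) (cmap zf af) Z = ∑ zf2 : Fs, if u zf2 = Z then Pf zf af zf2 else 0) :
    ∀ (n : ℕ) (L : List (Cs × Ac)) (Z : Cs), L.length = n →
      hrHistProb Pc (simSch u cmap e Pf sf z0) (u z0) n (L, Z)
        = simD u cmap Pf sf z0 (L, Z) := by
  intro n
  induction n with
  | zero =>
    intro L Z hL
    rw [List.length_eq_zero_iff] at hL
    subst hL
    rw [show hrHistProb Pc (simSch u cmap e Pf sf z0) (u z0) 0 (([] : List (Cs × Ac)), Z)
        = if ([] : List (Cs × Ac)) = [] ∧ Z = u z0 then 1 else 0 from rfl]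
    have hW : ∀ zf : Fs, simW Pf sf z0 ([], zf) = if zf = z0 then 1 else 0 := by
      intro zf
      rw [show simW Pf sf z0 ([], zf)
          = if ([] : List (Fs × Af)) = [] ∧ zf = z0 then 1 else 0 from rfl]
      simp
    have hpt : ∀ zf : Fs,
        (if u zf = Z ∧ mapPi u cmap ([] : List (Fs × Af)) = [] then simW Pf sf z0 ([], zf) else 0)
        = if zf = z0 then (if u z0 = Z then 1 else 0) else 0 := by
      intro zf
      by_cases h1 : zf = z0
      · subst h1
        by_cases h2 : u zf = Z <;> simp [hW, h2, mapPi_nil]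
      · by_cases h2 : u zf = Z <;> simp [hW, h1, h2, mapPi_nil]
    unfold simD
    rw [show ((([] : List (Cs × Ac)), Z).1.length) = 0 from rfl,
      show listsOfLen (Fs × Af) 0 = {([] : List (Fs × Af))} from rfl]
    simp only [Finset.sum_singleton]
    rw [Finset.sum_congr rfl (fun zf _ => hpt zf),
      Finset.sum_ite_eq' Finset.univ z0 (fun _ => if u z0 = Z then (1:ℝ) else 0)]
    by_cases hz : Z = u z0 <;> simp [hz, eq_comm]
  | succ n ih =>
    intro L Z hL
    cases L with
    | nil => simp at hL
    | cons q L' =>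
      obtain ⟨Z1, ac⟩ := q
      simp only [List.length_cons, Nat.add_right_cancel_iff] at hL
      rw [show hrHistProb Pc (simSch u cmap e Pf sf z0) (u z0) (n+1) ((Z1,ac)::L', Z)
          = hrHistProb Pc (simSch u cmap e Pf sf z0) (u z0) n (L', Z1)
            * simSch u cmap e Pf sf z0 (L', Z1) ac * Pc Z1 ac Z from rfl,
        ih L' Z1 hL]
      have hRHS : simD u cmap Pf sf z0 ((Z1,ac)::L', Z)
          = ∑ zf : Fs, ∑ af : Af, ∑ zf2 : Fs, ∑ l ∈ listsOfLen (Fs × Af) L'.length,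
              if u zf = Z1 ∧ cmap zf af = ac ∧ mapPi u cmap l = L' ∧ u zf2 = Z then
                simW Pf sf z0 (l, zf) * sf (l, zf) af * Pf zf af zf2
              else 0 := by
        unfold simD
        rw [show (((Z1,ac)::L' : List (Cs × Ac)), Z).1.length = L'.length + 1 from rfl]
        rw [Finset.sum_congr rfl (fun zf2 _ => sum_listsOfLen_succ L'.length _)]
        rw [Finset.sum_comm, Fintype.sum_prod_type]
        refine Finset.sum_congr rfl fun zf _ => Finset.sum_congr rfl fun af _ => ?_
        refine Finset.sum_congr rfl fun zf2 _ => Finset.sum_congr rfl fun l _ => ?_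
        rw [mapPi_cons]
        by_cases h1 : u zf = Z1 ∧ cmap zf af = ac ∧ mapPi u cmap l = L' ∧ u zf2 = Z
        · rw [if_pos ⟨h1.2.2.2, by rw [h1.1, h1.2.1, h1.2.2.1]⟩, if_pos h1,
            simW_cons]
        · rw [if_neg ?_, if_neg h1]
          rintro ⟨ha, hb⟩
          obtain ⟨hc1, hc2⟩ := List.cons.inj hb
          rw [Prod.mk.injEq] at hc1
          exact h1 ⟨hc1.1, hc1.2, hc2, ha⟩
      rw [hRHS]
      by_cases hD : 0 < simD u cmap Pf sf z0 (L', Z1)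
      · rw [show simSch u cmap e Pf sf z0 (L', Z1) ac
            = simN u cmap Pf sf z0 (L', Z1) ac / simD u cmap Pf sf z0 (L', Z1) from by
              unfold simSch; rw [if_pos hD]]
        have hne : simD u cmap Pf sf z0 (L', Z1) ≠ 0 := ne_of_gt hD
        rw [show simD u cmap Pf sf z0 (L', Z1)
            * (simN u cmap Pf sf z0 (L', Z1) ac / simD u cmap Pf sf z0 (L', Z1))
            = simN u cmap Pf sf z0 (L', Z1) ac from by
          rw [mul_comm, div_mul_eq_mul_div, mul_div_assoc, div_self hne, mul_one]]
        have hpoint : ∀ zf : Fs, ∀ l ∈ listsOfLen (Fs × Af) L'.length,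
            (if u zf = Z1 ∧ mapPi u cmap l = L' then
              simW Pf sf z0 (l, zf)
                * ∑ af : Af, (if cmap zf af = ac then sf (l, zf) af else 0)
            else 0) * Pc Z1 ac Z
            = ∑ af : Af, ∑ zf2 : Fs,
                if u zf = Z1 ∧ cmap zf af = ac ∧ mapPi u cmap l = L' ∧ u zf2 = Z then
                  simW Pf sf z0 (l, zf) * sf (l, zf) af * Pf zf af zf2 else 0 := by
          intro zf l hl
          by_cases hc : u zf = Z1 ∧ mapPi u cmap l = L'
          · rw [if_pos hc, Finset.mul_sum, Finset.sum_mul]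
            refine Finset.sum_congr rfl fun af _ => ?_
            by_cases hac : cmap zf af = ac
            · rw [if_pos hac]
              by_cases hsf0 : sf (l, zf) af = 0
              · rw [hsf0]
                refine Eq.trans (by ring) (Finset.sum_eq_zero fun zf2 _ => ?_).symm
                split
                · ring
                · rfl
              · have hen : Enabled Pf zf af :=
                  hsf.2.2 (l, zf) af (lt_of_le_of_ne (hsf.1 _ _) (Ne.symm hsf0))
                have hPceq : Pc Z1 ac Z = ∑ zf2 : Fs, if u zf2 = Z then Pf zf af zf2 else 0 := by
                  rw [← hc.1, ← hac]
                  exact hcm zf af hen Z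
                rw [hPceq, Finset.mul_sum]
                refine Finset.sum_congr rfl fun zf2 _ => ?_
                by_cases h2 : u zf2 = Z
                · rw [if_pos h2, if_pos ⟨hc.1, hac, hc.2, h2⟩]
                · rw [if_neg h2, if_neg (fun hcon => h2 hcon.2.2.2), mul_zero]
            · rw [if_neg hac]
              refine Eq.trans (by ring) (Finset.sum_eq_zero fun zf2 _ => ?_).symm
              rw [if_neg (fun hcon => hac hcon.2.1)]
          · rw [if_neg hc, zero_mul]
            refine (Finset.sum_eq_zero fun af _ => Finset.sum_eq_zero fun zf2 _ => ?_).symm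
            rw [if_neg (fun hcon => hc ⟨hcon.1, hcon.2.2.1⟩)]
        unfold simN
        rw [show (((L' : List (Cs × Ac)), Z1).1.length) = L'.length from rfl]
        rw [Finset.sum_mul]
        refine Finset.sum_congr rfl fun zf _ => ?_
        rw [Finset.sum_mul, Finset.sum_congr rfl (hpoint zf), Finset.sum_comm]
        exact Finset.sum_congr rfl fun af _ => Finset.sum_comm
      · have hD0 : simD u cmap Pf sf z0 (L', Z1) = 0 :=
          le_antisymm (not_lt.mp hD) (simD_nonneg hPf hsf.1 _)
        rw [hD0, zero_mul, zero_mul]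
        symm
        have hall : ∀ zf : Fs, ∀ l ∈ listsOfLen (Fs × Af) L'.length,
            (u zf = Z1 ∧ mapPi u cmap l = L') → simW Pf sf z0 (l, zf) = 0 := by
          have hD0' := hD0
          unfold simD at hD0'
          have h1 := (Finset.sum_eq_zero_iff_of_nonneg (fun zf _ =>
            Finset.sum_nonneg fun l _ => by
              split
              · exact simW_nonneg hPf hsf.1 _
              · exact le_rfl)).mp hD0'
          intro zf l hl hc
          have h2 := (Finset.sum_eq_zero_iff_of_nonneg (fun l _ => by
              split
              · exact simW_nonneg hPf hsf.1 _
              · exact le_rfl)).mp (h1 zf (Finset.mem_univ zf))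
          have h3 := h2 l hl
          rwa [if_pos hc] at h3
        refine Finset.sum_eq_zero fun zf _ => Finset.sum_eq_zero fun af _ =>
          Finset.sum_eq_zero fun zf2 _ => Finset.sum_eq_zero fun l hl => ?_
        by_cases hc : u zf = Z1 ∧ cmap zf af = ac ∧ mapPi u cmap l = L' ∧ u zf2 = Z
        · rw [if_pos hc, hall zf l hl ⟨hc.1, hc.2.2.1⟩, zero_mul, zero_mul]
        · rw [if_neg hc]
lemma hrProb_simSch {Pc : Cs → Ac → Cs → ℝ}
    (hsf : IsHR Pf sf) (hPf : ∀ s a s', 0 ≤ Pf s a s')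
    (hcm : ∀ zf af, Enabled Pf zf af → ∀ Z : Cs,
      Pc (u zf) (cmap zf af) Z = ∑ zf2 : Fs, if u zf2 = Z then Pf zf af zf2 else 0)
    (n : ℕ) (Z : Cs) :
    hrProb Pc (simSch u cmap e Pf sf z0) (u z0) n Z
      = ∑ zf : Fs, if u zf = Z then hrProb Pf sf z0 n zf else 0 := by
  rw [hrProb_eq_sum]
  rw [Finset.sum_congr rfl
    (fun L hL => simD_invariant hsf hPf hcm n L Z (mem_listsOfLen.1 hL))]
  have step1 : ∀ L ∈ listsOfLen (Cs × Ac) n, simD u cmap Pf sf z0 (L, Z)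
      = ∑ zf : Fs, ∑ l ∈ listsOfLen (Fs × Af) n,
          if u zf = Z ∧ mapPi u cmap l = L then simW Pf sf z0 (l, zf) else 0 := by
    intro L hL
    unfold simD
    rw [show ((L, Z).1.length) = L.length from rfl, mem_listsOfLen.1 hL]
  rw [Finset.sum_congr rfl step1, Finset.sum_comm]
  refine Finset.sum_congr rfl fun zf _ => ?_
  by_cases hA : u zf = Z
  · rw [if_pos hA, hrProb_eq_sum, Finset.sum_comm]
    refine Finset.sum_congr rfl fun l hl => ?_
    have hmem : mapPi u cmap l ∈ listsOfLen (Cs × Ac) n := by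
      rw [mem_listsOfLen, show (mapPi u cmap l).length = l.length from List.length_map _]
      exact mem_listsOfLen.1 hl
    have hpt : ∀ L, (if u zf = Z ∧ mapPi u cmap l = L then simW Pf sf z0 (l, zf) else 0)
        = if mapPi u cmap l = L then simW Pf sf z0 (l, zf) else 0 := by
      intro L
      by_cases h2 : mapPi u cmap l = L
      · rw [if_pos ⟨hA, h2⟩, if_pos h2]
      · rw [if_neg (fun hcon => h2 hcon.2), if_neg h2]
    rw [Finset.sum_congr rfl (fun L _ => hpt L),
      Finset.sum_ite_eq (listsOfLen (Cs × Ac) n) (mapPi u cmap l)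
        (fun _ => simW Pf sf z0 (l, zf)), if_pos hmem]
    unfold simW
    rw [show ((l, zf).1.length) = l.length from rfl, mem_listsOfLen.1 hl]
  · rw [if_neg hA]
    refine Finset.sum_eq_zero fun L _ => Finset.sum_eq_zero fun l _ => ?_
    rw [if_neg (fun hcon => hA hcon.1)]

lemma fiber_sum_le (u : Fs → Cs) (pf : Fs → ℝ) (gf : Fs → ℝ) (gc : Cs → ℝ)
    (hpf : ∀ zf, 0 ≤ pf zf) (hg : ∀ zf, gf zf ≤ gc (u zf)) :
    ∑ zf : Fs, pf zf * gf zf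
      ≤ ∑ Z : Cs, (∑ zf : Fs, if u zf = Z then pf zf else 0) * gc Z := by
  calc ∑ zf : Fs, pf zf * gf zf
      ≤ ∑ zf : Fs, pf zf * gc (u zf) :=
        Finset.sum_le_sum fun zf _ => mul_le_mul_of_nonneg_left (hg zf) (hpf zf)
    _ = ∑ zf : Fs, ∑ Z : Cs, (if u zf = Z then pf zf * gc Z else 0) := by
        refine Finset.sum_congr rfl fun zf _ => ?_
        rw [Finset.sum_ite_eq Finset.univ (u zf) (fun Z => pf zf * gc Z)]
        simp
    _ = ∑ Z : Cs, ∑ zf : Fs, (if u zf = Z then pf zf * gc Z else 0) := Finset.sum_comm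
    _ = ∑ Z : Cs, (∑ zf : Fs, if u zf = Z then pf zf else 0) * gc Z := by
        refine Finset.sum_congr rfl fun Z _ => ?_
        rw [Finset.sum_mul]
        refine Finset.sum_congr rfl fun zf _ => ?_
        rw [ite_mul, zero_mul]

end Sim


section ValueAux
variable {q t : ℝ}

lemma value_term_nonneg (hq : 0 < q) (ht : 0 ≤ t) (c f : S → ℝ)
    (hc : ∀ s, 0 ≤ c s) (hf : ∀ s, 0 ≤ f s) (p : ℕ → S → ℝ)
    (hp : ∀ n s, 0 ≤ p n s) (i : ℕ) :
    0 ≤ phi (q * t) i * ∑ s, p i s * f s + psi (q * t) i * ∑ s, p i s * (c s / q) := by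
  have hlam : 0 ≤ q * t := mul_nonneg hq.le ht
  refine add_nonneg (mul_nonneg (phi_nonneg hlam i) ?_) (mul_nonneg (psi_nonneg hlam i) ?_)
  · exact Finset.sum_nonneg fun s _ => mul_nonneg (hp i s) (hf s)
  · exact Finset.sum_nonneg fun s _ => mul_nonneg (hp i s) (div_nonneg (hc s) hq.le)

lemma value_term_le (hq : 0 < q) (ht : 0 ≤ t) (c f : S → ℝ)
    (hc : ∀ s, 0 ≤ c s) (hf : ∀ s, 0 ≤ f s) (p : ℕ → S → ℝ)
    (hp : ∀ n s, 0 ≤ p n s) (hp1 : ∀ n, ∑ s, p n s ≤ 1) (i : ℕ) :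
    phi (q * t) i * ∑ s, p i s * f s + psi (q * t) i * ∑ s, p i s * (c s / q)
      ≤ phi (q * t) i * ∑ s, f s + psi (q * t) i * ∑ s, c s / q := by
  have hlam : 0 ≤ q * t := mul_nonneg hq.le ht
  have hple : ∀ s, p i s ≤ 1 := fun s =>
    le_trans (Finset.single_le_sum (fun s' _ => hp i s') (Finset.mem_univ s)) (hp1 i)
  refine add_le_add ?_ ?_
  · refine mul_le_mul_of_nonneg_left (Finset.sum_le_sum fun s _ => ?_) (phi_nonneg hlam i)
    exact mul_le_of_le_one_left (hf s) (hple s)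
  · refine mul_le_mul_of_nonneg_left (Finset.sum_le_sum fun s _ => ?_) (psi_nonneg hlam i)
    exact mul_le_of_le_one_left (div_nonneg (hc s) hq.le) (hple s)

lemma summable_value_bound (hq : 0 < q) (ht : 0 ≤ t) (c f : S → ℝ) :
    Summable (fun i => phi (q * t) i * ∑ s, f s + psi (q * t) i * ∑ s, c s / q) :=
  ((summable_phi (q * t)).mul_right _).add
    ((summable_psi (mul_nonneg hq.le ht)).mul_right _)

lemma value_summable (hq : 0 < q) (ht : 0 ≤ t) (c f : S → ℝ)
    (hc : ∀ s, 0 ≤ c s) (hf : ∀ s, 0 ≤ f s) (p : ℕ → S → ℝ)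
    (hp : ∀ n s, 0 ≤ p n s) (hp1 : ∀ n, ∑ s, p n s ≤ 1) :
    Summable (fun i => phi (q * t) i * ∑ s, p i s * f s
      + psi (q * t) i * ∑ s, p i s * (c s / q)) :=
  Summable.of_nonneg_of_le (value_term_nonneg hq ht c f hc hf p hp)
    (value_term_le hq ht c f hc hf p hp hp1) (summable_value_bound hq ht c f)

lemma value_le_bound (hq : 0 < q) (ht : 0 ≤ t) (c f : S → ℝ)
    (hc : ∀ s, 0 ≤ c s) (hf : ∀ s, 0 ≤ f s) (p : ℕ → S → ℝ)
    (hp : ∀ n s, 0 ≤ p n s) (hp1 : ∀ n, ∑ s, p n s ≤ 1) :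
    value q t c f p ≤ ∑' i : ℕ, (phi (q * t) i * ∑ s, f s + psi (q * t) i * ∑ s, c s / q) := by
  unfold value
  exact Summable.tsum_le_tsum (value_term_le hq ht c f hc hf p hp hp1)
    (value_summable hq ht c f hc hf p hp hp1) (summable_value_bound hq ht c f)

end ValueAux


/-- under the refinement correspondence, refining the partition
cannot worsen the upper bound: the fine maximal value is at most the coarse one. -/
theorem stmt4 {S Ac Af : Type} [Fintype S] [DecidableEq S]
    [Fintype Ac] [DecidableEq Ac] [Fintype Af] [DecidableEq Af]
    (partc partf : Finset (Finset S))
    (hpc : IsPartition partc) (hpf : IsPartition partf)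
    (href : ∀ z' ∈ partf, ∃ z ∈ partc, z' ⊆ z)
    (Pc : {z // z ∈ partc} → Ac → {z // z ∈ partc} → ℝ) (hPc : IsDTMDP Pc)
    (Pf : {z // z ∈ partf} → Af → {z // z ∈ partf} → ℝ) (hPf : IsDTMDP Pf)
    (cc fc : {z // z ∈ partc} → ℝ) (cf' ff : {z // z ∈ partf} → ℝ)
    (hcc : ∀ z, 0 ≤ cc z) (hfc : ∀ z, 0 ≤ fc z)
    (hcf : ∀ z, 0 ≤ cf' z) (hff : ∀ z, 0 ≤ ff z)
    (hrew : ∀ (z : {z // z ∈ partc}) (z' : {z // z ∈ partf}), z'.1 ⊆ z.1 →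
      cf' z' ≤ cc z ∧ ff z' ≤ fc z)
    (hcorr : ∀ (z : {z // z ∈ partc}) (z' : {z // z ∈ partf}), z'.1 ⊆ z.1 →
      ∀ af, Enabled Pf z' af → ∃ ac, Enabled Pc z ac ∧
        ∀ Z : {z // z ∈ partc},
          Pc z ac Z =
            ∑ Z' ∈ Finset.univ.filter (fun Z' : {z // z ∈ partf} => Z'.1 ⊆ Z.1),
              Pf z' af Z')
    (q t : ℝ) (hq : 0 < q) (ht : 0 ≤ t) :
    ∀ (z : {z // z ∈ partc}) (z' : {z // z ∈ partf}), z'.1 ⊆ z.1 →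
      (⨆ sch' : {sch : List ({z // z ∈ partf} × Af) × {z // z ∈ partf} → Af → ℝ //
          IsHR Pf sch},
        value q t cf' ff (hrProb Pf sch'.1 z')) ≤
      ⨆ sch : {sch : List ({z // z ∈ partc} × Ac) × {z // z ∈ partc} → Ac → ℝ //
          IsHR Pc sch},
        value q t cc fc (hrProb Pc sch.1 z) := by
  classical
  intro z z' hzz'
  have hlam : 0 ≤ q * t := mul_nonneg hq.le ht
  have hu0 : ∀ zf : {z // z ∈ partf}, ∃ zc : {z // z ∈ partc}, zf.1 ⊆ zc.1 := by
    intro zf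
    obtain ⟨zc, hzc, hsub⟩ := href zf.1 zf.2
    exact ⟨⟨zc, hzc⟩, hsub⟩
  choose u hu using hu0
  have hu_eq : ∀ (zf : {z // z ∈ partf}) (zc : {z // z ∈ partc}), zf.1 ⊆ zc.1 → u zf = zc := by
    intro zf zc hsub
    by_contra hne
    obtain ⟨s, hs⟩ := hpf.1 zf.1 zf.2
    have hd := hpc.2.2 (u zf).1 (u zf).2 zc.1 zc.2 (fun hh => hne (Subtype.ext hh))
    exact absurd (hsub hs) (Finset.disjoint_left.mp hd (hu zf hs))
  choose e he using hPc.2.2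
  have hc0 : ∀ (zf : {z // z ∈ partf}) (af : Af), ∃ ac : Ac, Enabled Pc (u zf) ac ∧
      (Enabled Pf zf af → ∀ Z : {z // z ∈ partc}, Pc (u zf) ac Z
        = ∑ zf2 : {z // z ∈ partf}, if u zf2 = Z then Pf zf af zf2 else 0) := by
    intro zf af
    by_cases hen : Enabled Pf zf af
    · obtain ⟨ac, hac1, hac2⟩ := hcorr (u zf) zf (hu zf) af hen
      refine ⟨ac, hac1, fun _ Z => ?_⟩
      rw [hac2 Z, Finset.sum_filter]
      refine Finset.sum_congr rfl fun zf2 _ => ?_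
      by_cases h2 : zf2.1 ⊆ Z.1
      · rw [if_pos h2, if_pos (hu_eq zf2 Z h2)]
      · rw [if_neg h2, if_neg (fun hh => h2 (by rw [← hh]; exact hu zf2))]
    · exact ⟨e (u zf), he _, fun h => absurd h hen⟩
  choose cmap hcen hcP using hc0
  obtain ⟨sf0, hsf0⟩ := exists_isHR hPf
  haveI : Nonempty {sch : List ({z // z ∈ partf} × Af) × {z // z ∈ partf} → Af → ℝ //
      IsHR Pf sch} := ⟨⟨sf0, hsf0⟩⟩
  have hBdd : BddAbove (Set.range
      (fun sch : {sch : List ({z // z ∈ partc} × Ac) × {z // z ∈ partc} → Ac → ℝ //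
          IsHR Pc sch} => value q t cc fc (hrProb Pc sch.1 z))) := by
    refine ⟨∑' i : ℕ, (phi (q * t) i * ∑ Z, fc Z + psi (q * t) i * ∑ Z, cc Z / q), ?_⟩
    rintro x ⟨⟨sch, hsch⟩, rfl⟩
    exact value_le_bound hq ht cc fc hcc hfc _
      (fun n s => hrProb_nonneg hPc.1 hsch.1 n s) (fun n => sum_hrProb_le_one hPc hsch n)
  refine ciSup_le fun sf' => ?_
  obtain ⟨sf, hsf⟩ := sf'
  have hHR : IsHR Pc (simSch u cmap e Pf sf z') := isHR_simSch hsf hPf.1 hcen he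
  refine le_trans ?_ (le_ciSup hBdd ⟨simSch u cmap e Pf sf z', hHR⟩)
  have huz : u z' = z := hu_eq z' z hzz'
  rw [← huz]
  have hfiber := hrProb_simSch (u := u) (cmap := cmap) (e := e) (Pc := Pc)
    (sf := sf) (z0 := z') hsf hPf.1 hcP
  have hsumf : Summable (fun i => phi (q * t) i * ∑ s, hrProb Pf sf z' i s * ff s
      + psi (q * t) i * ∑ s, hrProb Pf sf z' i s * (cf' s / q)) :=
    value_summable hq ht cf' ff hcf hff _
      (fun n s => hrProb_nonneg hPf.1 hsf.1 n s) (fun n => sum_hrProb_le_one hPf hsf n)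
  have hsumc : Summable (fun i => phi (q * t) i
        * ∑ s, hrProb Pc (simSch u cmap e Pf sf z') (u z') i s * fc s
      + psi (q * t) i * ∑ s, hrProb Pc (simSch u cmap e Pf sf z') (u z') i s * (cc s / q)) :=
    value_summable hq ht cc fc hcc hfc _
      (fun n s => hrProb_nonneg hPc.1 hHR.1 n s) (fun n => sum_hrProb_le_one hPc hHR n)
  unfold value
  refine Summable.tsum_le_tsum (fun i => ?_) hsumf hsumc
  refine add_le_add ?_ ?_
  · refine mul_le_mul_of_nonneg_left ?_ (phi_nonneg hlam i)
    calc ∑ s, hrProb Pf sf z' i s * ff s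
        ≤ ∑ Z, (∑ zf, if u zf = Z then hrProb Pf sf z' i zf else 0) * fc Z :=
          fiber_sum_le u _ _ _ (fun zf => hrProb_nonneg hPf.1 hsf.1 i zf)
            (fun zf => (hrew (u zf) zf (hu zf)).2)
      _ = ∑ Z, hrProb Pc (simSch u cmap e Pf sf z') (u z') i Z * fc Z := by
          refine Finset.sum_congr rfl fun Z _ => ?_
          rw [hfiber i Z]
  · refine mul_le_mul_of_nonneg_left ?_ (psi_nonneg hlam i)
    calc ∑ s, hrProb Pf sf z' i s * (cf' s / q)
        ≤ ∑ Z, (∑ zf, if u zf = Z then hrProb Pf sf z' i zf else 0) * (cc Z / q) :=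
          fiber_sum_le u _ (fun zf => cf' zf / q) (fun Z => cc Z / q)
            (fun zf => hrProb_nonneg hPf.1 hsf.1 i zf)
            (fun zf => by
              have h1 := (hrew (u zf) zf (hu zf)).1
              exact (div_le_div_iff_of_pos_right hq).2 h1)
      _ = ∑ Z, hrProb Pc (simSch u cmap e Pf sf z') (u z') i Z * (cc Z / q) := by
          refine Finset.sum_congr rfl fun Z _ => ?_
          rw [hfiber i Z]


end TR
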